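/- The function S(x^α, α) + x^{1-α} S_L(x^α, 1) is nonincreasing in x on [0,1] for fixed α ∈ (0,1), where S_L(y, 1) = ∫₀^{F⁻¹(y)} R(γ) dF(γ); consequently the feedback-reduced throughput S_CS-FR(α, p) = α[S(p^α, α) + p^{1-α} S_L(p^α, 1)] is nonincreasing in the no-feedback probability p and satisfies S_CS-FR(α, p) ≤ S_CS(α). -/

import Mathlib

open MeasureTheory intervalIntegral

/-- One-sided limit bound: if `Q` is continuous on `[0,1]` and `Q ≤ m` on `(a,b) ⊆ [0,1]`,
then `Q ≤ m` at either endpoint. -/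
lemma endpoint_le {Q : ℝ → ℝ} (hQ : ContinuousOn Q (Set.Icc 0 1)) {a b x m : ℝ}
    (hab : a < b) (ha : 0 ≤ a) (hb : b ≤ 1) (hx : x = a ∨ x = b)
    (h : ∀ t ∈ Set.Ioo a b, Q t ≤ m) : Q x ≤ m := by
  have hsub : Set.Ioo a b ⊆ Set.Icc 0 1 := fun t ht =>
    ⟨ha.trans ht.1.le, ht.2.le.trans hb⟩
  have hxI : x ∈ Set.Icc (0:ℝ) 1 := by
    rcases hx with rfl | rfl
    · exact ⟨ha, le_trans hab.le hb⟩
    · exact ⟨le_trans ha hab.le, hb⟩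
  have hcl : x ∈ closure (Set.Ioo a b) := by
    rw [closure_Ioo hab.ne]
    rcases hx with rfl | rfl
    · exact ⟨le_refl _, hab.le⟩
    · exact ⟨hab.le, le_refl _⟩
  have hne : (nhdsWithin x (Set.Ioo a b)).NeBot :=
    mem_closure_iff_nhdsWithin_neBot.1 hcl
  have htend : Filter.Tendsto Q (nhdsWithin x (Set.Ioo a b)) (nhds (Q x)) :=
    (hQ x hxI).mono_left (nhdsWithin_mono _ hsub)
  exact le_of_tendsto htend (Filter.eventually_of_mem self_mem_nhdsWithin h)

lemma endpoint_ge {Q : ℝ → ℝ} (hQ : ContinuousOn Q (Set.Icc 0 1)) {a b x m : ℝ}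
    (hab : a < b) (ha : 0 ≤ a) (hb : b ≤ 1) (hx : x = a ∨ x = b)
    (h : ∀ t ∈ Set.Ioo a b, m ≤ Q t) : m ≤ Q x := by
  have := endpoint_le (Q := fun t => -Q t) (hQ.neg) hab ha hb hx (m := -m)
    (fun t ht => neg_le_neg (h t ht))
  have h2 : -Q x ≤ -m := this
  linarith

/-- `u ↦ R (F⁻¹ u)` is monotone on `[0,1]`. -/
lemma Q_monotoneOn (F R : ℝ → ℝ) (hFmono : StrictMono F) (hFcont : Continuous F)
    (hRmono : Monotone R)
    (hQcont : ContinuousOn (fun u => R (Function.invFun F u)) (Set.Icc 0 1)) :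
    MonotoneOn (fun u => R (Function.invFun F u)) (Set.Icc 0 1) := by
  set Q : ℝ → ℝ := fun u => R (Function.invFun F u) with hQdef
  have hinj := hFmono.injective
  have hleft : ∀ s, Function.invFun F (F s) = s :=
    Function.leftInverse_invFun hinj
  have hord : (Set.range F).OrdConnected :=
    (isPreconnected_range hFcont).ordConnected
  -- monotone on points of the range
  have hrm : ∀ s t : ℝ, s ∈ Set.range F → t ∈ Set.range F → s ≤ t → Q s ≤ Q t := by
    rintro s t ⟨a, rfl⟩ ⟨b, rfl⟩ hst
    simp only [hQdef, hleft]
    exact hRmono (hFmono.le_iff_le.1 hst)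
  -- constant off the range
  have hc : ∀ s t : ℝ, s ∉ Set.range F → t ∉ Set.range F → Q s = Q t := by
    intro s t hs ht
    simp only [hQdef]
    rw [Function.invFun_neg (by simpa [Set.range] using hs),
      Function.invFun_neg (by simpa [Set.range] using ht)]
  intro u hu v hv huv
  rcases eq_or_lt_of_le huv with rfl | huv
  · exact le_refl _
  by_cases hur : u ∈ Set.range F <;> by_cases hvr : v ∈ Set.range F
  · exact hrm u v hur hvr huv.le
  · -- u in range, v not: b = sup of range points ≤ v
    set b := sSup (Set.range F ∩ Set.Iic v) with hbdef
    have hmem : u ∈ Set.range F ∩ Set.Iic v := ⟨hur, huv.le⟩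
    have hbdd : BddAbove (Set.range F ∩ Set.Iic v) := ⟨v, fun t ht => ht.2⟩
    have hub : u ≤ b := le_csSup hbdd hmem
    have hbv : b ≤ v := csSup_le ⟨u, hmem⟩ fun t ht => ht.2
    have claim1 : ∀ t ∈ Set.Ioo u b, Q u ≤ Q t := by
      intro t ht
      obtain ⟨s, hs, hts⟩ := exists_lt_of_lt_csSup ⟨u, hmem⟩ ht.2
      have htr : t ∈ Set.range F := hord.out hur hs.1 ⟨ht.1.le, hts.le⟩
      exact hrm u t hur htr ht.1.le
    have claim2 : ∀ t ∈ Set.Ioo b v, Q t = Q v := by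
      intro t ht
      have htr : t ∉ Set.range F := by
        intro htr
        exact absurd (le_csSup hbdd ⟨htr, ht.2.le⟩) (not_le.2 ht.1)
      exact hc t v htr hvr
    have hQub : Q u ≤ Q b := by
      rcases eq_or_lt_of_le hub with heq | hub'
      · rw [heq]
      · exact endpoint_ge hQcont hub' hu.1 (hbv.trans hv.2) (Or.inr rfl) claim1
    have hQbv : Q b = Q v := by
      rcases eq_or_lt_of_le hbv with heq | hbv'
      · rw [heq]
      · refine le_antisymm ?_ ?_
        · exact endpoint_le hQcont hbv' (hu.1.trans hub) hv.2 (Or.inl rfl)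
            fun t ht => (claim2 t ht).le
        · exact endpoint_ge hQcont hbv' (hu.1.trans hub) hv.2 (Or.inl rfl)
            fun t ht => (claim2 t ht).ge
    rw [← hQbv]; exact hQub
  · -- u not in range, v in range: a = inf of range points ≥ u
    set a := sInf (Set.range F ∩ Set.Ici u) with hadef
    have hmem : v ∈ Set.range F ∩ Set.Ici u := ⟨hvr, huv.le⟩
    have hbdd : BddBelow (Set.range F ∩ Set.Ici u) := ⟨u, fun t ht => ht.2⟩
    have hav : a ≤ v := csInf_le hbdd hmem
    have hua : u ≤ a := le_csInf ⟨v, hmem⟩ fun t ht => ht.2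
    have claim1 : ∀ t ∈ Set.Ioo a v, Q t ≤ Q v := by
      intro t ht
      obtain ⟨s, hs, hts⟩ := exists_lt_of_csInf_lt ⟨v, hmem⟩ ht.1
      have htr : t ∈ Set.range F := hord.out hs.1 hvr ⟨hts.le, ht.2.le⟩
      exact hrm t v htr hvr ht.2.le
    have claim2 : ∀ t ∈ Set.Ioo u a, Q t = Q u := by
      intro t ht
      have htr : t ∉ Set.range F := by
        intro htr
        exact absurd (csInf_le hbdd ⟨htr, ht.1.le⟩) (not_le.2 ht.2)
      exact hc t u htr hur
    have hQav : Q a ≤ Q v := by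
      rcases eq_or_lt_of_le hav with heq | hav'
      · rw [heq]
      · exact endpoint_le hQcont hav' (hu.1.trans hua) hv.2 (Or.inl rfl) claim1
    have hQua : Q u = Q a := by
      rcases eq_or_lt_of_le hua with heq | hua'
      · rw [heq]
      · refine le_antisymm ?_ ?_
        · exact endpoint_ge hQcont hua' hu.1 (hav.trans hv.2) (Or.inr rfl)
            fun t ht => (claim2 t ht).ge
        · exact endpoint_le hQcont hua' hu.1 (hav.trans hv.2) (Or.inr rfl)
            fun t ht => (claim2 t ht).le
    rw [hQua]; exact hQav
  · exact (hc u v hur hvr).le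

/-- Core analytic lemma: for `Q` continuous, monotone, nonnegative on `[0,1]`,
`x ↦ ∫_{x^α}^1 Q(u)·(1/α)u^{1/α-1} du + x^{1-α} ∫_0^{x^α} Q` is antitone on `[0,1]`. -/
lemma core_antitone {Q : ℝ → ℝ} (hQc : ContinuousOn Q (Set.Icc 0 1))
    (hQm : MonotoneOn Q (Set.Icc 0 1)) (hQ0 : ∀ u, 0 ≤ Q u)
    {α : ℝ} (hα : α ∈ Set.Ioo (0:ℝ) 1)
    (hint : IntervalIntegrable (fun u => Q u * ((1/α) * u ^ (1/α - 1))) volume 0 1)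
    (hint' : IntervalIntegrable Q volume 0 1) :
    AntitoneOn (fun x => (∫ u in (x ^ α)..(1:ℝ), Q u * ((1/α) * u ^ (1/α - 1)))
      + x ^ (1-α) * ∫ u in (0:ℝ)..(x ^ α), Q u) (Set.Icc 0 1) := by
  obtain ⟨hα0, hα1⟩ := hα
  set g : ℝ → ℝ := fun u => Q u * ((1/α) * u ^ (1/α - 1)) with hg
  have hαne : α ≠ 0 := ne_of_gt hα0
  have hrpow : ∀ β : ℝ, 0 ≤ β → Continuous fun x : ℝ => x ^ β := by
    intro β hβ
    exact continuous_iff_continuousAt.2 fun x =>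
      Real.continuousAt_rpow_const x β (Or.inr hβ)
  have hmaps : ∀ x ∈ Set.Icc (0:ℝ) 1, x ^ α ∈ Set.Icc (0:ℝ) 1 := by
    intro x hx
    exact ⟨Real.rpow_nonneg hx.1 α, Real.rpow_le_one hx.1 hx.2 hα0.le⟩
  have huIcc : Set.uIcc (0:ℝ) 1 = Set.Icc 0 1 := Set.uIcc_of_le zero_le_one
  -- continuity of the whole function on [0,1]
  have hcont : ContinuousOn (fun x => (∫ u in (x ^ α)..(1:ℝ), g u)
      + x ^ (1-α) * ∫ u in (0:ℝ)..(x ^ α), Q u) (Set.Icc 0 1) := by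
    have hInt1 : IntegrableOn g (Set.uIcc (0:ℝ) 1) volume := by
      rw [huIcc]
      exact (hint.1).congr_set_ae MeasureTheory.Ioc_ae_eq_Icc.symm
    have hInt2 : IntegrableOn Q (Set.uIcc (0:ℝ) 1) volume := by
      rw [huIcc]
      exact (hint'.1).congr_set_ae MeasureTheory.Ioc_ae_eq_Icc.symm
    have hp1 := continuousOn_primitive_interval_left (μ := volume) hInt1
    have hp2 := continuousOn_primitive_interval (μ := volume) hInt2
    rw [huIcc] at hp1 hp2
    exact (hp1.comp ((hrpow α hα0.le).continuousOn) hmaps).add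
      (((hrpow (1-α) (by linarith)).continuousOn).mul
        (hp2.comp ((hrpow α hα0.le).continuousOn) hmaps))
  -- the derivative at interior points
  have key : ∀ x ∈ Set.Ioo (0:ℝ) 1, HasDerivAt
      (fun x => (∫ u in (x ^ α)..(1:ℝ), g u) + x ^ (1-α) * ∫ u in (0:ℝ)..(x ^ α), Q u)
      ((1-α) * (x ^ (-α) * (∫ u in (0:ℝ)..(x ^ α), Q u) - Q (x ^ α))) x := by
    intro x hx
    have hx0 : (0:ℝ) < x := hx.1
    have hy0 : 0 < x ^ α := Real.rpow_pos_of_pos hx0 α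
    have hy1 : x ^ α < 1 := Real.rpow_lt_one hx0.le hx.2 hα0
    have hyI : x ^ α ∈ Set.Ioo (0:ℝ) 1 := ⟨hy0, hy1⟩
    have hgc : ContinuousOn g (Set.Ioo 0 1) := by
      refine (hQc.mono Set.Ioo_subset_Icc_self).mul (continuousOn_const.mul ?_)
      intro u hu
      exact (Real.continuousAt_rpow_const u _ (Or.inl (ne_of_gt hu.1))).continuousWithinAt
    have hQc' : ContinuousOn Q (Set.Ioo 0 1) := hQc.mono Set.Ioo_subset_Icc_self
    have hsub : Set.uIcc (x ^ α) 1 ⊆ Set.uIcc (0:ℝ) 1 := by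
      rw [Set.uIcc_of_le hy1.le, huIcc]
      exact Set.Icc_subset_Icc hy0.le le_rfl
    have hsub' : Set.uIcc (0:ℝ) (x ^ α) ⊆ Set.uIcc (0:ℝ) 1 := by
      rw [Set.uIcc_of_le hy0.le, huIcc]
      exact Set.Icc_subset_Icc le_rfl hy1.le
    have h1 : HasDerivAt (fun x : ℝ => x ^ α) (α * x ^ (α - 1)) x :=
      Real.hasDerivAt_rpow_const (Or.inl (ne_of_gt hx0))
    have h2 : HasDerivAt (fun t => ∫ u in t..(1:ℝ), g u) (-g (x ^ α)) (x ^ α) :=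
      integral_hasDerivAt_left (hint.mono_set hsub)
        (hgc.stronglyMeasurableAtFilter isOpen_Ioo _ hyI)
        (hgc.continuousAt (isOpen_Ioo.mem_nhds hyI))
    have h3 : HasDerivAt (fun t => ∫ u in (0:ℝ)..t, Q u) (Q (x ^ α)) (x ^ α) :=
      integral_hasDerivAt_right (hint'.mono_set hsub')
        (hQc'.stronglyMeasurableAtFilter isOpen_Ioo _ hyI)
        (hQc'.continuousAt (isOpen_Ioo.mem_nhds hyI))
    have h4 : HasDerivAt (fun x : ℝ => x ^ (1-α)) ((1-α) * x ^ (1-α-1)) x :=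
      Real.hasDerivAt_rpow_const (Or.inl (ne_of_gt hx0))
    have hS : HasDerivAt (fun x : ℝ => ∫ u in (x ^ α)..(1:ℝ), g u)
        ((-g (x ^ α)) * (α * x ^ (α-1))) x := by
        have := h2.comp x h1; exact this
    have hSL : HasDerivAt (fun x : ℝ => ∫ u in (0:ℝ)..(x ^ α), Q u)
        (Q (x ^ α) * (α * x ^ (α-1))) x := by
        have := h3.comp x h1; exact this
    have htot := hS.add (h4.mul hSL)
    refine htot.congr_deriv (Eq.symm ?_)
    have e1 : (x ^ α) ^ (1/α - 1) = x ^ (1-α) := by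
      rw [← Real.rpow_mul hx0.le]
      congr 1
      field_simp
    have e2 : x ^ (1-α) * x ^ (α-1) = 1 := by
      rw [← Real.rpow_add hx0]
      norm_num
    have e3 : x ^ (1-α-1) = x ^ (-α) := by
      norm_num
    have e5 : (1/α) * α = 1 := by field_simp
    simp only [hg, e1, e3]
    linear_combination ((1-α) * Q (x ^ α)) * e2
      + (Q (x ^ α) * (x ^ (1-α)) * (x ^ (α-1))) * e5
  -- conclude
  refine antitoneOn_of_deriv_nonpos (convex_Icc 0 1) hcont ?_ ?_
  · rw [interior_Icc]
    exact fun x hx => ((key x hx).differentiableAt).differentiableWithinAt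
  · rw [interior_Icc]
    intro x hx
    rw [(key x hx).deriv]
    have hx0 : (0:ℝ) < x := hx.1
    have hy0 : 0 < x ^ α := Real.rpow_pos_of_pos hx0 α
    have hy1 : x ^ α < 1 := Real.rpow_lt_one hx0.le hx.2 hα0
    have hsub' : Set.uIcc (0:ℝ) (x ^ α) ⊆ Set.uIcc (0:ℝ) 1 := by
      rw [Set.uIcc_of_le hy0.le, huIcc]
      exact Set.Icc_subset_Icc le_rfl hy1.le
    have hIle : (∫ u in (0:ℝ)..(x ^ α), Q u) ≤ x ^ α * Q (x ^ α) := by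
      calc (∫ u in (0:ℝ)..(x ^ α), Q u)
          ≤ ∫ _u in (0:ℝ)..(x ^ α), Q (x ^ α) := by
            refine intervalIntegral.integral_mono_on hy0.le
              (hint'.mono_set hsub') intervalIntegrable_const ?_
            intro u hu
            exact hQm ⟨hu.1, hu.2.trans hy1.le⟩ ⟨hy0.le, hy1.le⟩ hu.2
        _ = x ^ α * Q (x ^ α) := by
            rw [intervalIntegral.integral_const]
            simp
    have e4 : x ^ (-α) * x ^ α = 1 := by
      rw [← Real.rpow_add hx0]
      norm_num
    have hnn : (0:ℝ) ≤ x ^ (-α) := (Real.rpow_pos_of_pos hx0 _).le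
    have h5 : x ^ (-α) * (∫ u in (0:ℝ)..(x ^ α), Q u) - Q (x ^ α) ≤ 0 := by
      have hm := mul_le_mul_of_nonneg_left hIle hnn
      rw [← mul_assoc, e4, one_mul] at hm
      linarith
    exact mul_nonpos_iff.2 (Or.inl ⟨by linarith, h5⟩)

/-- Universal throughput function `S(x, α) = ∫_{F⁻¹(x)}^∞ R(γ) d[F(γ)]^{1/α}`,
written after the substitution `u = F(γ)`. -/
noncomputable def S (F R : ℝ → ℝ) (x α : ℝ) : ℝ :=
  ∫ u in x..(1 : ℝ), R (Function.invFun F u) * ((1 / α) * u ^ (1 / α - 1))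

/-- `S_L(y, 1) = ∫₀^{F⁻¹(y)} R dF = ∫₀^y R(F⁻¹(u)) du`. -/
noncomputable def SL (F R : ℝ → ℝ) (y : ℝ) : ℝ :=
  ∫ u in (0 : ℝ)..y, R (Function.invFun F u)

/-- `S(x^α, α) + x^{1-α} S_L(x^α, 1)` is nonincreasing in `x` on `[0,1]`; consequently
the feedback-reduced throughput `S_CS-FR(α, p) = α[S(p^α, α) + p^{1-α} S_L(p^α, 1)]`
is nonincreasing in the no-feedback probability `p` and is at most
`S_CS(α) = α S(0, α)`. -/
theorem feedback_reduction_throughput_antitone (F R : ℝ → ℝ)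
    (hFmono : StrictMono F) (hFcont : Continuous F)
    (hR0 : ∀ y, 0 ≤ R y) (hRmono : Monotone R)
    (hQcont : ContinuousOn (fun u => R (Function.invFun F u)) (Set.Icc 0 1))
    (α : ℝ) (hα : α ∈ Set.Ioo (0 : ℝ) 1)
    (hint : IntervalIntegrable
      (fun u => R (Function.invFun F u) * ((1 / α) * u ^ (1 / α - 1))) volume 0 1)
    (hint' : IntervalIntegrable (fun u => R (Function.invFun F u)) volume 0 1) :
    AntitoneOn (fun x => S F R (x ^ α) α + x ^ (1 - α) * SL F R (x ^ α))
        (Set.Icc (0 : ℝ) 1) ∧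
    AntitoneOn (fun p => α * (S F R (p ^ α) α + p ^ (1 - α) * SL F R (p ^ α)))
        (Set.Icc (0 : ℝ) 1) ∧
    (∀ p ∈ Set.Ioo (0 : ℝ) 1,
      α * (S F R (p ^ α) α + p ^ (1 - α) * SL F R (p ^ α)) ≤ α * S F R 0 α) := by
  have hQm : MonotoneOn (fun u => R (Function.invFun F u)) (Set.Icc 0 1) :=
    Q_monotoneOn F R hFmono hFcont hRmono hQcont
  have h1 : AntitoneOn (fun x => S F R (x ^ α) α + x ^ (1 - α) * SL F R (x ^ α))
      (Set.Icc (0 : ℝ) 1) := by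
    simp only [S, SL]
    exact core_antitone hQcont hQm (fun u => hR0 _) hα hint hint'
  have h2 : AntitoneOn (fun p => α * (S F R (p ^ α) α + p ^ (1 - α) * SL F R (p ^ α)))
      (Set.Icc (0 : ℝ) 1) := fun a ha b hb hab =>
    mul_le_mul_of_nonneg_left (h1 ha hb hab) hα.1.le
  refine ⟨h1, h2, ?_⟩
  intro p hp
  have h0 : S F R ((0:ℝ) ^ α) α + (0:ℝ) ^ (1 - α) * SL F R ((0:ℝ) ^ α) = S F R 0 α := by
    rw [Real.zero_rpow (ne_of_gt hα.1), Real.zero_rpow (by have := hα.2; intro h; linarith : (1 - α) ≠ 0)]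
    ring
  have := h1 (Set.left_mem_Icc.2 zero_le_one) ⟨hp.1.le, hp.2.le⟩ hp.1.le
  have this' : S F R (p ^ α) α + p ^ (1 - α) * SL F R (p ^ α) ≤ S F R 0 α := by
    simpa only [h0] using this
  exact mul_le_mul_of_nonneg_left this' hα.1.le
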